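/- For every type-preserving boundary strategy χ of Max, every strategy μ of Min in the closed region graph T̄, every ε > 0, every strategy χ_ε that is ε-close to χ, and every configuration q: A_Max(q,μ,χ_ε) ≥ A_Max(q,μ[q,χ_ε],χ) − ε, where μ[q,χ_ε] is any type-preserving boundary strategy of Min such that the run from q under (μ[q,χ_ε],χ) has the same type as the run from q under (μ,χ_ε). Symmetrically, for every type-preserving boundary strategy μ of Min, every strategy χ of Max in T̄, every ε > 0, every strategy μ_ε that is ε-close to μ, and every configuration q: A_Min(q,μ_ε,χ) ≤ A_Min(q,μ,χ[q,μ_ε]) + ε, where χ[q,μ_ε] is any type-preserving boundary strategy of Max such that the run from q under (μ,χ[q,μ_ε]) has the same type as the run from q under (μ_ε,χ). -/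

import Mathlib

noncomputable section

attribute [local instance] Classical.propDecidable

/-- A two-player (Min/Max) game arena with real-valued step costs. -/
structure Arena (Conf Move : Type) where
  Tr : Conf → Move → Conf → Prop
  cost : Conf → Move → ℝ
  IsMin : Conf → Prop

namespace Arena

variable {Conf Move : Type}

/-- A finite run in the arena. -/
structure FinRun (G : Arena Conf Move) where
  n : ℕ
  q : Fin (n + 1) → Conf
  m : Fin n → Move
  valid : ∀ i : Fin n, G.Tr (q i.castSucc) (m i) (q i.succ)

/-- The last configuration of a finite run. -/
def FinRun.last {G : Arena Conf Move} (r : G.FinRun) : Conf := r.q (Fin.last r.n)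

/-- The first configuration of a finite run. -/
def FinRun.first {G : Arena Conf Move} (r : G.FinRun) : Conf := r.q 0

/-- The trivial run consisting of a single configuration. -/
def single (G : Arena Conf Move) (q0 : Conf) : G.FinRun :=
  ⟨0, fun _ => q0, Fin.elim0, fun i => i.elim0⟩

/-- Extending a finite run by one transition. -/
def FinRun.extend {G : Arena Conf Move} (r : G.FinRun) (mv : Move) (q' : Conf)
    (h : G.Tr r.last mv q') : G.FinRun where
  n := r.n + 1
  q := Fin.snoc r.q q'
  m := Fin.snoc r.m mv
  valid := by
    intro i
    induction i using Fin.lastCases with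
    | last =>
        rw [Fin.snoc_castSucc, Fin.succ_last, Fin.snoc_last, Fin.snoc_last]
        exact h
    | cast j =>
        rw [Fin.succ_castSucc, Fin.snoc_castSucc, Fin.snoc_castSucc, Fin.snoc_castSucc]
        exact r.valid j

/-- Strategies of player Min: mappings from finite runs to moves that are
available whenever the last configuration belongs to Min. -/
def MinStrategy (G : Arena Conf Move) : Type :=
  {σ : G.FinRun → Move // ∀ r : G.FinRun, G.IsMin r.last → ∃ q', G.Tr r.last (σ r) q'}

/-- Strategies of player Max. -/
def MaxStrategy (G : Arena Conf Move) : Type :=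
  {σ : G.FinRun → Move // ∀ r : G.FinRun, ¬ G.IsMin r.last → ∃ q', G.Tr r.last (σ r) q'}

/-- A strategy is positional if its choice depends only on the last configuration. -/
def Positional {G : Arena Conf Move} (σ : G.FinRun → Move) : Prop :=
  ∀ r r' : G.FinRun, r.last = r'.last → σ r = σ r'

/-- The finite prefixes of the unique play from `q0` in which Min uses `μ`
and Max uses `χ`. -/
def play (G : Arena Conf Move) (μ : G.MinStrategy) (χ : G.MaxStrategy) (q0 : Conf) :
    ℕ → G.FinRun
  | 0 => G.single q0
  | n + 1 =>
    let r := G.play μ χ q0 n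
    if h : G.IsMin r.last then
      r.extend (μ.1 r) (Classical.choose (μ.2 r h)) (Classical.choose_spec (μ.2 r h))
    else
      r.extend (χ.1 r) (Classical.choose (χ.2 r h)) (Classical.choose_spec (χ.2 r h))

/-- Total cost (e.g. total time) of a finite run. -/
def FinRun.time {G : Arena Conf Move} (r : G.FinRun) : ℝ :=
  ∑ i : Fin r.n, G.cost (r.q i.castSucc) (r.m i)

/-- Payoff of player Min (to be minimised): limsup of average cost. -/
def AMin (G : Arena Conf Move) (q0 : Conf) (μ : G.MinStrategy) (χ : G.MaxStrategy) : ℝ :=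
  Filter.limsup (fun n : ℕ => (G.play μ χ q0 n).time / n) Filter.atTop

/-- Payoff of player Max (to be maximised): liminf of average cost. -/
def AMax (G : Arena Conf Move) (q0 : Conf) (μ : G.MinStrategy) (χ : G.MaxStrategy) : ℝ :=
  Filter.liminf (fun n : ℕ => (G.play μ χ q0 n).time / n) Filter.atTop

/-- Upper value of the game at `q0`. -/
def upperVal (G : Arena Conf Move) (q0 : Conf) : ℝ :=
  ⨅ μ : G.MinStrategy, ⨆ χ : G.MaxStrategy, G.AMin q0 μ χ

/-- Lower value of the game at `q0`. -/
def lowerVal (G : Arena Conf Move) (q0 : Conf) : ℝ :=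
  ⨆ χ : G.MaxStrategy, ⨅ μ : G.MinStrategy, G.AMax q0 μ χ

/-- The value of the game at `q0` (meaningful when the game is determined). -/
def val (G : Arena Conf Move) (q0 : Conf) : ℝ := G.upperVal q0

end Arena
/-- `k`-bounded clock valuations. -/
def IsVal (k : ℕ) {C : Type} (ν : C → ℝ) : Prop := ∀ c, 0 ≤ ν c ∧ ν c ≤ (k : ℝ)

/-- Two clock valuations satisfy exactly the same simple clock constraints
`c ⋈ i` and `c − c' ⋈ i` with `i ∈ {0,…,k}` and `⋈ ∈ {<,=,>}` (hence also ≤, ≥). -/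
def RegEq (k : ℕ) {C : Type} (ν ν' : C → ℝ) : Prop :=
  ∀ i : ℕ, i ≤ k → ∀ c c' : C,
    ((ν c < (i : ℝ) ↔ ν' c < (i : ℝ)) ∧ (ν c = (i : ℝ) ↔ ν' c = (i : ℝ)) ∧
      ((i : ℝ) < ν c ↔ (i : ℝ) < ν' c)) ∧
    ((ν c - ν c' < (i : ℝ) ↔ ν' c - ν' c' < (i : ℝ)) ∧
      (ν c - ν c' = (i : ℝ) ↔ ν' c - ν' c' = (i : ℝ)) ∧
      ((i : ℝ) < ν c - ν c' ↔ (i : ℝ) < ν' c - ν' c'))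

/-- An average-time game on a (bounded) timed automaton: a timed automaton
together with a partition of locations between players Min and Max. -/
structure TimedGame where
  L : Type
  C : Type
  A : Type
  finL : Finite L
  finC : Finite C
  finA : Finite A
  k : ℕ
  S : Set (L × (C → ℝ))
  En : A → Set (L × (C → ℝ))
  δ : L → A → L
  ϱ : A → Set C
  LMin : Set L
  bounded : ∀ s ∈ S, IsVal k s.2
  S_zone : (∀ (ℓ : L) (ν ν' : C → ℝ), RegEq k ν ν' → ((ℓ, ν) ∈ S ↔ (ℓ, ν') ∈ S)) ∧
    ∀ ℓ : L, Convex ℝ {ν : C → ℝ | (ℓ, ν) ∈ S}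
  En_sub : ∀ a, En a ⊆ S
  En_zone : ∀ a : A,
    (∀ (ℓ : L) (ν ν' : C → ℝ), RegEq k ν ν' → ((ℓ, ν) ∈ En a ↔ (ℓ, ν') ∈ En a)) ∧
    ∀ ℓ : L, Convex ℝ {ν : C → ℝ | (ℓ, ν) ∈ En a}
  nonstuck : ∀ s ∈ S, ∃ (t : ℝ) (a : A), 0 ≤ t ∧
    (∀ t', 0 ≤ t' → t' ≤ t → (s.1, fun c => s.2 c + t') ∈ S) ∧
    ((s.1, fun c => s.2 c + t) ∈ En a) ∧
    ((δ s.1 a, fun c => if c ∈ ϱ a then 0 else s.2 c + t) ∈ S)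

namespace TimedGame

/-- Configurations of the timed automaton. -/
abbrev Q (T : TimedGame) : Type := T.L × (T.C → ℝ)

/-- Resetting the clocks in `X` to zero. -/
def resetv (T : TimedGame) (ν : T.C → ℝ) (X : Set T.C) : T.C → ℝ :=
  fun c => if c ∈ X then 0 else ν c

/-- The successor configuration after the timed action `τ = (t, a)`. -/
def tsucc (T : TimedGame) (s : T.Q) (τ : ℝ × T.A) : T.Q :=
  (T.δ s.1 τ.2, T.resetv (fun c => s.2 c + τ.1) (T.ϱ τ.2))

/-- The transition relation `s →_τ s'` of the timed automaton. -/
def Trans (T : TimedGame) (s : T.Q) (τ : ℝ × T.A) (s' : T.Q) : Prop :=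
  0 ≤ τ.1 ∧ (∀ t', 0 ≤ t' → t' ≤ τ.1 → (s.1, fun c => s.2 c + t') ∈ T.S) ∧
  ((s.1, fun c => s.2 c + τ.1) ∈ T.En τ.2) ∧ s' = T.tsucc s τ ∧ s' ∈ T.S

/-- The game arena of the average-time game played on the timed automaton. -/
def taArena (T : TimedGame) : Arena {s : T.Q // s ∈ T.S} (ℝ × T.A) where
  Tr := fun s τ s' => T.Trans s.1 τ s'.1
  cost := fun _ τ => τ.1
  IsMin := fun s => s.1.1 ∈ T.LMin

/-- A clock region: an equivalence class of the region equivalence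
(restricted to `k`-bounded valuations). -/
def IsClockRegion (T : TimedGame) (P : Set (T.C → ℝ)) : Prop :=
  ∃ ν : T.C → ℝ, P = {ν' | IsVal T.k ν' ∧ RegEq T.k ν ν'}

/-- Regions: pairs of a location and a clock region. -/
def Region (T : TimedGame) : Type :=
  T.L × {P : Set (T.C → ℝ) // T.IsClockRegion P}

/-- The clock region of a valuation. -/
def clockRegionOf (T : TimedGame) (ν : T.C → ℝ) : {P : Set (T.C → ℝ) // T.IsClockRegion P} :=
  ⟨{ν' | IsVal T.k ν' ∧ RegEq T.k ν ν'}, ⟨ν, rfl⟩⟩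

/-- The region `[s]` of a configuration `s`. -/
def regionOf (T : TimedGame) (s : T.Q) : T.Region := (s.1, T.clockRegionOf s.2)

/-- The configurations `Ω` of the region graphs: pairs of a configuration
of the timed automaton and a region. -/
abbrev Omega (T : TimedGame) : Type := T.Q × T.Region

/-- `(s, (ℓ, P))` is a state of the closed region graph: the locations match
and `s`'s valuation lies in the closure of the clock region `P`. -/
def barS (T : TimedGame) (q : T.Omega) : Prop :=
  q.1.1 = q.2.1 ∧ q.1.2 ∈ closure q.2.2.1

/-- `(s, (ℓ, P))` is a state of the region graph: the locations match and
`s`'s valuation lies in the clock region `P`. -/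
def tildeS (T : TimedGame) (q : T.Omega) : Prop :=
  q.1.1 = q.2.1 ∧ q.1.2 ∈ q.2.2.1

/-- `R →_* R'` : the region `R'` is a time successor of `R`. -/
def timeSucc (T : TimedGame) (R R' : T.Region) : Prop :=
  R.1 = R'.1 ∧ ∀ ν ∈ R.2.1, ∃ t : ℝ, 0 ≤ t ∧
    (∀ t', 0 ≤ t' → t' ≤ t → (R.1, fun c => ν c + t') ∈ T.S) ∧
    (fun c => ν c + t) ∈ R'.2.1

/-- The discrete transition `s →^a s'` of the timed automaton. -/
def astep (T : TimedGame) (s : T.Q) (a : T.A) (s' : T.Q) : Prop :=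
  s ∈ T.S ∧ s' ∈ T.S ∧ s ∈ T.En a ∧ s' = (T.δ s.1 a, T.resetv s.2 (T.ϱ a))

/-- `R →^a R'` at the level of regions. -/
def regAct (T : TimedGame) (R : T.Region) (a : T.A) (R' : T.Region) : Prop :=
  ∃ ν ∈ R.2.1, ∃ ν' ∈ R'.2.1, T.astep (R.1, ν) a (R'.1, ν')

/-- Moves of the region graphs: a delay, an intermediate region, and an action. -/
abbrev RMove (T : TimedGame) : Type := ℝ × T.Region × T.A

/-- Transitions underlying pre-runs: `(s', R') = succ((s,R), (t,R'',a))` with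
`R →_* R'' →^a R'`. -/
def preTrans (T : TimedGame) (q : T.Omega) (m : T.RMove) (q' : T.Omega) : Prop :=
  0 ≤ m.1 ∧ T.timeSucc q.2 m.2.1 ∧ T.regAct m.2.1 m.2.2 q'.2 ∧
  q'.1 = T.tsucc q.1 (m.1, m.2.2)

/-- Labelled transitions of the closed region graph `T̄`. -/
def cTrans (T : TimedGame) (q : T.Omega) (m : T.RMove) (q' : T.Omega) : Prop :=
  T.preTrans q m q' ∧ T.barS q ∧ T.barS q' ∧
  (fun c => q.1.2 c + m.1) ∈ closure m.2.1.2.1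

/-- Labelled transitions of the boundary region graph `T̂`: additionally the
intermediate valuation lies on the boundary of the intermediate region. -/
def bTrans (T : TimedGame) (q : T.Omega) (m : T.RMove) (q' : T.Omega) : Prop :=
  T.cTrans q m q' ∧ (fun c => q.1.2 c + m.1) ∈ frontier m.2.1.2.1

/-- Labelled transitions of the region graph `T̃`. -/
def rTrans (T : TimedGame) (q : T.Omega) (m : T.RMove) (q' : T.Omega) : Prop :=
  T.preTrans q m q' ∧ T.tildeS q ∧ T.tildeS q' ∧
  (fun c => q.1.2 c + m.1) ∈ m.2.1.2.1

/-- The arena of pre-runs over `Ω`. -/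
def preArena (T : TimedGame) : Arena T.Omega T.RMove where
  Tr := T.preTrans
  cost := fun _ m => m.1
  IsMin := fun q => q.2.1 ∈ T.LMin

/-- Finite pre-runs. -/
abbrev PreRunF (T : TimedGame) : Type := (T.preArena).FinRun

/-- Pre-strategies of Min. -/
abbrev MinPre (T : TimedGame) : Type := (T.preArena).MinStrategy

/-- Pre-strategies of Max. -/
abbrev MaxPre (T : TimedGame) : Type := (T.preArena).MaxStrategy

/-- A pre-strategy of Min is a strategy in the closed region graph `T̄`
if it always waits into the closure of the chosen intermediate region. -/
def MinClosed (T : TimedGame) (μ : T.MinPre) : Prop :=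
  ∀ r : T.PreRunF,
    (fun c => (Arena.FinRun.last r).1.2 c + (μ.1 r).1) ∈ closure (μ.1 r).2.1.2.1

def MaxClosed (T : TimedGame) (χ : T.MaxPre) : Prop :=
  ∀ r : T.PreRunF,
    (fun c => (Arena.FinRun.last r).1.2 c + (χ.1 r).1) ∈ closure (χ.1 r).2.1.2.1

/-- Admissible strategies: strategies in the region graph `T̃`. -/
def MinAdmissible (T : TimedGame) (μ : T.MinPre) : Prop :=
  ∀ r : T.PreRunF,
    (fun c => (Arena.FinRun.last r).1.2 c + (μ.1 r).1) ∈ (μ.1 r).2.1.2.1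

def MaxAdmissible (T : TimedGame) (χ : T.MaxPre) : Prop :=
  ∀ r : T.PreRunF,
    (fun c => (Arena.FinRun.last r).1.2 c + (χ.1 r).1) ∈ (χ.1 r).2.1.2.1

/-- Boundary strategies of Min: the delay is the **infimum** of the delays
reaching the closure of the chosen intermediate region. -/
def MinBoundary (T : TimedGame) (μ : T.MinPre) : Prop :=
  ∀ r : T.PreRunF,
    (μ.1 r).1 = sInf {t : ℝ | 0 ≤ t ∧
      (fun c => (Arena.FinRun.last r).1.2 c + t) ∈ closure (μ.1 r).2.1.2.1}

/-- Boundary strategies of Max: the delay is the **supremum** of the delays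
reaching the closure of the chosen intermediate region. -/
def MaxBoundary (T : TimedGame) (χ : T.MaxPre) : Prop :=
  ∀ r : T.PreRunF,
    (χ.1 r).1 = sSup {t : ℝ | 0 ≤ t ∧
      (fun c => (Arena.FinRun.last r).1.2 c + t) ∈ closure (χ.1 r).2.1.2.1}

/-- The sequence of regions visited by a finite pre-run (its type, part 1). -/
def typeConfs (T : TimedGame) (r : T.PreRunF) : ℕ → Option T.Region :=
  fun i => if h : i < r.n + 1 then some ((r.q ⟨i, h⟩).2) else none

/-- The sequence of intermediate regions and actions of a finite pre-run
(its type, part 2). -/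
def typeMoves (T : TimedGame) (r : T.PreRunF) : ℕ → Option (T.Region × T.A) :=
  fun i => if h : i < r.n then some ((r.m ⟨i, h⟩).2) else none

/-- Two finite pre-runs have the same type. -/
def sameType (T : TimedGame) (r r' : T.PreRunF) : Prop :=
  T.typeConfs r = T.typeConfs r' ∧ T.typeMoves r = T.typeMoves r'

/-- The waiting time `t(s, α)` of the boundary timed action `α = (b, c, a)`. -/
def tOf (T : TimedGame) (s : T.Q) (α : ℕ × T.C × T.A) : ℝ :=
  if s.2 α.2.1 ≤ (α.1 : ℝ) then (α.1 : ℝ) - s.2 α.2.1 else 0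

/-- Type-preserving boundary strategies of Min: runs of the same type are
assigned the same intermediate region, action and boundary timed action. -/
def MinTP (T : TimedGame) (μ : T.MinPre) : Prop :=
  T.MinBoundary μ ∧
  ∀ r r' : T.PreRunF, T.sameType r r' →
    (μ.1 r).2 = (μ.1 r').2 ∧
    ∃ (b : ℕ) (c : T.C), b ≤ T.k ∧
      (μ.1 r).1 = T.tOf (Arena.FinRun.last r).1 (b, c, (μ.1 r).2.2) ∧
      (μ.1 r').1 = T.tOf (Arena.FinRun.last r').1 (b, c, (μ.1 r').2.2)

def MaxTP (T : TimedGame) (χ : T.MaxPre) : Prop :=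
  T.MaxBoundary χ ∧
  ∀ r r' : T.PreRunF, T.sameType r r' →
    (χ.1 r).2 = (χ.1 r').2 ∧
    ∃ (b : ℕ) (c : T.C), b ≤ T.k ∧
      (χ.1 r).1 = T.tOf (Arena.FinRun.last r).1 (b, c, (χ.1 r).2.2) ∧
      (χ.1 r').1 = T.tOf (Arena.FinRun.last r').1 (b, c, (χ.1 r').2.2)

/-- `μ_ε` is `ε`-close to the type-preserving boundary strategy `μ` of Min. -/
def EpsCloseMin (T : TimedGame) (μ με : T.MinPre) (ε : ℝ) : Prop :=
  ∀ r : T.PreRunF, (με.1 r).2 = (μ.1 r).2 ∧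
    (fun c => (Arena.FinRun.last r).1.2 c + (με.1 r).1) ∈ (μ.1 r).2.1.2.1 ∧
    (με.1 r).1 ≤ (μ.1 r).1 + ε

/-- `χ_ε` is `ε`-close to the type-preserving boundary strategy `χ` of Max. -/
def EpsCloseMax (T : TimedGame) (χ χε : T.MaxPre) (ε : ℝ) : Prop :=
  ∀ r : T.PreRunF, (χε.1 r).2 = (χ.1 r).2 ∧
    (fun c => (Arena.FinRun.last r).1.2 c + (χε.1 r).1) ∈ (χ.1 r).2.1.2.1 ∧
    (χ.1 r).1 - ε ≤ (χε.1 r).1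

/-- Upper value of the game on the subgraph of region graphs whose strategies
are the pre-strategies satisfying `PMin`, `PMax` respectively. -/
def upperG (T : TimedGame) (PMin : T.MinPre → Prop) (PMax : T.MaxPre → Prop)
    (q : T.Omega) : ℝ :=
  ⨅ μ : {μ : T.MinPre // PMin μ}, ⨆ χ : {χ : T.MaxPre // PMax χ},
    Arena.AMin T.preArena q μ.1 χ.1

/-- Lower value. -/
def lowerG (T : TimedGame) (PMin : T.MinPre → Prop) (PMax : T.MaxPre → Prop)
    (q : T.Omega) : ℝ :=
  ⨆ χ : {χ : T.MaxPre // PMax χ}, ⨅ μ : {μ : T.MinPre // PMin μ},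
    Arena.AMax T.preArena q μ.1 χ.1

def upperBar (T : TimedGame) : T.Omega → ℝ := T.upperG T.MinClosed T.MaxClosed
def lowerBar (T : TimedGame) : T.Omega → ℝ := T.lowerG T.MinClosed T.MaxClosed
/-- The value of the average-time game on the closed region graph `T̄`. -/
def valBar (T : TimedGame) : T.Omega → ℝ := T.upperBar

def upperHat (T : TimedGame) : T.Omega → ℝ := T.upperG T.MinBoundary T.MaxBoundary
def lowerHat (T : TimedGame) : T.Omega → ℝ := T.lowerG T.MinBoundary T.MaxBoundary
/-- The value of the average-time game on the boundary region graph `T̂`. -/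
def valHat (T : TimedGame) : T.Omega → ℝ := T.upperHat

def upperTilde (T : TimedGame) : T.Omega → ℝ := T.upperG T.MinAdmissible T.MaxAdmissible
def lowerTilde (T : TimedGame) : T.Omega → ℝ := T.lowerG T.MinAdmissible T.MaxAdmissible
/-- The value of the average-time game on the region graph `T̃`. -/
def valTilde (T : TimedGame) : T.Omega → ℝ := T.upperTilde

/-- A function is simple on a set `X` of configurations. -/
def SimpleOn (T : TimedGame) (X : Set T.Omega) (F : T.Omega → ℝ) : Prop :=
  (∃ e : ℤ, ∀ q ∈ X, F q = (e : ℝ)) ∨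
  (∃ (e : ℤ) (c : T.C), ∀ q ∈ X, F q = (e : ℝ) - q.1.2 c)

/-- A function on the configurations of the closed region graph is regionally
simple. -/
def RegionallySimple (T : TimedGame) (F : T.Omega → ℝ) : Prop :=
  ∀ R : T.Region, T.SimpleOn {q : T.Omega | T.barS q ∧ q.2 = R} F

/-- A function on the configurations of the closed region graph is regionally
constant. -/
def RegionallyConstant (T : TimedGame) (F : T.Omega → ℝ) : Prop :=
  ∀ R : T.Region, ∃ v : ℝ, ∀ q : T.Omega, T.barS q → q.2 = R → F q = v

/-- The configuration `(s, [s])` of the region graphs determined by a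
configuration `s` of the timed automaton. -/
def confOf (T : TimedGame) (s : T.Q) : T.Omega := (s, T.regionOf s)

/-- A region is thin if some clock has an integer value throughout its closure. -/
def Thin (T : TimedGame) (R : T.Region) : Prop :=
  ∃ c : T.C, ∀ ν ∈ closure R.2.1, ∃ m : ℤ, ν c = (m : ℝ)

/-- `R'` is the immediate time successor of `R`. -/
def ImmTimeSucc (T : TimedGame) (R R' : T.Region) : Prop :=
  R.1 = R'.1 ∧ ∀ ν ∈ R.2.1, ∃ ε : ℝ, 0 < ε ∧
    ∀ t : ℝ, 0 < t → t < ε → (fun c => ν c + t) ∈ R'.2.1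

end TimedGame



namespace Arena
variable {Conf Move : Type} {G : Arena Conf Move}

lemma extend_last (r : G.FinRun) (mv : Move) (q' : Conf) (h : G.Tr r.last mv q') :
    (r.extend mv q' h).last = q' := by
  simp [FinRun.extend, FinRun.last]

lemma extend_time (r : G.FinRun) (mv : Move) (q' : Conf) (h : G.Tr r.last mv q') :
    (r.extend mv q' h).time = r.time + G.cost r.last mv := by
  show ∑ i : Fin (r.n+1), G.cost ((Fin.snoc r.q q' : Fin (r.n+2) → Conf) i.castSucc)
      ((Fin.snoc r.m mv : Fin (r.n+1) → Move) i)
    = r.time + G.cost r.last mv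
  rw [Fin.sum_univ_castSucc]
  simp only [Fin.snoc_castSucc, Fin.snoc_last, FinRun.time, FinRun.last]

lemma play_n (μ : G.MinStrategy) (χ : G.MaxStrategy) (q0 : Conf) :
    ∀ n, (G.play μ χ q0 n).n = n := by
  intro n
  induction n with
  | zero => rfl
  | succ n ih =>
    rw [Arena.play]
    by_cases h : G.IsMin (G.play μ χ q0 n).last
    · simp only [dif_pos h, FinRun.extend, ih]
    · simp only [dif_neg h, FinRun.extend, ih]

lemma play_succ_min (μ : G.MinStrategy) (χ : G.MaxStrategy) (q0 : Conf) (n : ℕ)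
    (h : G.IsMin (G.play μ χ q0 n).last) :
    G.play μ χ q0 (n+1) = (G.play μ χ q0 n).extend (μ.1 (G.play μ χ q0 n))
      (Classical.choose (μ.2 _ h)) (Classical.choose_spec (μ.2 _ h)) := by
  rw [Arena.play]; simp only [dif_pos h]

lemma play_succ_max (μ : G.MinStrategy) (χ : G.MaxStrategy) (q0 : Conf) (n : ℕ)
    (h : ¬ G.IsMin (G.play μ χ q0 n).last) :
    G.play μ χ q0 (n+1) = (G.play μ χ q0 n).extend (χ.1 (G.play μ χ q0 n))
      (Classical.choose (χ.2 _ h)) (Classical.choose_spec (χ.2 _ h)) := by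
  rw [Arena.play]; simp only [dif_neg h]

lemma play_zero_last (μ : G.MinStrategy) (χ : G.MaxStrategy) (q0 : Conf) :
    (G.play μ χ q0 0).last = q0 := rfl

lemma play_zero_time (μ : G.MinStrategy) (χ : G.MaxStrategy) (q0 : Conf) :
    (G.play μ χ q0 0).time = 0 := by
  show ∑ i : Fin 0, G.cost q0 (Fin.elim0 i) = (0:ℝ)
  simp

end Arena
namespace TimedGame
variable {T : TimedGame}

lemma isVal_of_closure (Rc : {P : Set (T.C → ℝ) // T.IsClockRegion P}) :
    ∀ ν ∈ closure Rc.1, IsVal T.k ν := by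
  obtain ⟨ν₀, hP⟩ := Rc.2
  have hsub : Rc.1 ⊆ {ν : T.C → ℝ | IsVal T.k ν} := by
    rw [hP]; intro x hx; exact hx.1
  have hcl : IsClosed {ν : T.C → ℝ | IsVal T.k ν} := by
    have he : {ν : T.C → ℝ | IsVal T.k ν}
        = ⋂ c : T.C, (fun ν : T.C → ℝ => ν c) ⁻¹' Set.Icc 0 (T.k : ℝ) := by
      ext ν; simp [IsVal, Set.mem_iInter, Set.mem_Icc]
    rw [he]
    exact isClosed_iInter fun c => isClosed_Icc.preimage (continuous_apply c)
  exact fun ν hν => closure_minimal hsub hcl hν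

lemma typeConfs_last (r : T.PreRunF) :
    T.typeConfs r r.n = some ((Arena.FinRun.last r).2) := by
  have h : r.n < r.n + 1 := Nat.lt_succ_self _
  simp only [typeConfs, dif_pos h]
  rfl

lemma typeMoves_extend (r : T.PreRunF) (mv : T.RMove) (q' : T.Omega)
    (h : (T.preArena).Tr (Arena.FinRun.last r) mv q') :
    T.typeMoves (r.extend mv q' h) r.n = some mv.2 := by
  have hlt : r.n < (r.extend mv q' h).n := Nat.lt_succ_self _
  simp only [typeMoves, dif_pos hlt]
  congr 1
  show ((Fin.snoc r.m mv : Fin (r.n+1) → T.RMove) (Fin.last r.n)).2 = mv.2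
  rw [Fin.snoc_last]

lemma sameType_n {r r' : T.PreRunF} (h : T.sameType r r') : r.n = r'.n := by
  have h1 := congrFun h.1 r.n
  have h2 := congrFun h.1 r'.n
  rw [typeConfs_last] at h1
  rw [typeConfs_last] at h2
  have l1 : r.n < r'.n + 1 := by
    by_contra hc
    simp only [typeConfs, dif_neg hc] at h1
    exact nomatch h1
  have l2 : r'.n < r.n + 1 := by
    by_contra hc
    rw [eq_comm] at h2
    simp only [typeConfs, dif_neg hc] at h2
    exact nomatch h2
  omega

lemma sameType_last {r r' : T.PreRunF} (h : T.sameType r r') :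
    (Arena.FinRun.last r).2 = (Arena.FinRun.last r').2 := by
  have hn := sameType_n h
  have h1 := congrFun h.1 r.n
  rw [typeConfs_last, hn, typeConfs_last] at h1
  exact Option.some.inj h1

lemma tOf_sub_le (s s' : T.Q) (b : ℕ) (c : T.C) (a a' : T.A) :
    T.tOf s (b,c,a) - T.tOf s' (b,c,a') ≤ max (s'.2 c - s.2 c) 0 := by
  unfold tOf
  dsimp only
  split_ifs <;> simp only [le_max_iff] <;>
    [left; left; right; right] <;> linarith

lemma tOf_le_k (s : T.Q) (b : ℕ) (c : T.C) (a : T.A) (hb : b ≤ T.k) (hs : 0 ≤ s.2 c) :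
    T.tOf s (b,c,a) ≤ (T.k : ℝ) := by
  have hbk : (b : ℝ) ≤ (T.k : ℝ) := Nat.cast_le.mpr hb
  unfold tOf
  dsimp only
  split_ifs <;> [linarith; positivity]

end TimedGame
section AuxArith

lemma aux_invariants {C : Type} (Tt Tt' : ℕ → ℝ) (νf νf' : ℕ → C → ℝ) (ε k : ℝ)
    (hε : 0 ≤ ε) (_hk : 0 ≤ k)
    (hT0 : Tt 0 = 0) (hT'0 : Tt' 0 = 0) (hν0 : νf 0 = νf' 0) (hν0pos : ∀ d, 0 ≤ νf 0 d)
    (hstep : ∀ n, ∃ (t t' : ℝ) (X : Set C) (c : C),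
      Tt (n+1) = Tt n + t ∧ Tt' (n+1) = Tt' n + t' ∧ 0 ≤ t ∧ 0 ≤ t' ∧
      (0 ≤ νf n c → t ≤ k) ∧ (0 ≤ νf' n c → t' ≤ k) ∧
      t - t' ≤ max (νf' n c - νf n c) 0 + ε ∧
      (∀ d, νf (n+1) d = if d ∈ X then 0 else νf n d + t) ∧
      (∀ d, νf' (n+1) d = if d ∈ X then 0 else νf' n d + t')) :
    ∀ n, Tt n ≤ Tt' n + n * ε ∧ 0 ≤ Tt n ∧ 0 ≤ Tt' n ∧ Tt n ≤ n * k ∧ Tt' n ≤ n * k := by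
  have main : ∀ n, (∀ d, 0 ≤ νf n d ∧ 0 ≤ νf' n d) ∧
      Tt n - Tt' n ≤ n * ε ∧ (∀ d, Tt n - Tt' n + (νf' n d - νf n d) ≤ n * ε) ∧
      0 ≤ Tt n ∧ 0 ≤ Tt' n ∧ Tt n ≤ n * k ∧ Tt' n ≤ n * k := by
    intro n
    induction n with
    | zero =>
      refine ⟨fun d => ⟨hν0pos d, hν0 ▸ hν0pos d⟩, ?_, ?_, ?_, ?_, ?_, ?_⟩ <;>
        simp [hT0, hT'0, hν0]
    | succ n ih =>
      obtain ⟨hpos, hA, hB, hTp, hT'p, hTk, hT'k⟩ := ih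
      obtain ⟨t, t', X, c, e1, e2, ht, ht', htk, ht'k, hlt, hre, hre'⟩ := hstep n
      have hposc := hpos c
      have hmax : max (νf' n c - νf n c) 0 ≤ n * ε - (Tt n - Tt' n) := by
        apply max_le
        · linarith [hB c]
        · linarith
      have hA' : Tt (n+1) - Tt' (n+1) ≤ ((n+1 : ℕ) : ℝ) * ε := by
        push_cast
        rw [e1, e2]
        linarith
      refine ⟨?_, hA', ?_, ?_, ?_, ?_, ?_⟩
      · intro d
        rw [hre d, hre' d]
        split_ifs with h
        · exact ⟨le_refl 0, le_refl 0⟩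
        · exact ⟨by linarith [(hpos d).1], by linarith [(hpos d).2]⟩
      · intro d
        rw [hre d, hre' d]
        split_ifs with h
        · push_cast at hA' ⊢
          linarith
        · push_cast
          rw [e1, e2]
          have := hB d
          linarith
      · rw [e1]; linarith
      · rw [e2]; linarith
      · rw [e1]
        push_cast
        have := htk hposc.1
        linarith
      · rw [e2]
        push_cast
        have := ht'k hposc.2
        linarith
  intro n
  obtain ⟨_, hA, _, hTp, hT'p, hTk, hT'k⟩ := main n
  exact ⟨by linarith, hTp, hT'p, hTk, hT'k⟩

lemma aux_liminf_le (u v : ℕ → ℝ) (ε K : ℝ)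
    (h : ∀ n, u n ≤ v n + ε) (hu0 : ∀ n, 0 ≤ u n) (hvK : ∀ n, v n ≤ K) :
    Filter.liminf u Filter.atTop ≤ Filter.liminf v Filter.atTop + ε := by
  rw [Filter.liminf_eq, Filter.liminf_eq]
  refine csSup_le ⟨0, Filter.Eventually.of_forall hu0⟩ ?_
  intro a ha
  have hmem : a - ε ∈ {a : ℝ | ∀ᶠ n in Filter.atTop, a ≤ v n} := by
    simp only [Set.mem_setOf_eq] at ha ⊢
    filter_upwards [ha] with n hn
    linarith [h n]
  have hbdd : BddAbove {a : ℝ | ∀ᶠ n in Filter.atTop, a ≤ v n} := by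
    refine ⟨K, fun b hb => ?_⟩
    simp only [Set.mem_setOf_eq] at hb
    obtain ⟨n, hn⟩ := hb.exists
    exact hn.trans (hvK n)
  linarith [le_csSup hbdd hmem]

lemma aux_limsup_le (u v : ℕ → ℝ) (ε K : ℝ)
    (h : ∀ n, u n ≤ v n + ε) (hu0 : ∀ n, 0 ≤ u n) (hvK : ∀ n, v n ≤ K) :
    Filter.limsup u Filter.atTop ≤ Filter.limsup v Filter.atTop + ε := by
  rw [Filter.limsup_eq, Filter.limsup_eq, ← sub_le_iff_le_add]
  refine le_csInf ⟨K, Filter.Eventually.of_forall hvK⟩ ?_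
  intro b hb
  rw [sub_le_iff_le_add]
  simp only [Set.mem_setOf_eq] at hb
  have hmem : b + ε ∈ {a : ℝ | ∀ᶠ n in Filter.atTop, u n ≤ a} := by
    simp only [Set.mem_setOf_eq]
    filter_upwards [hb] with n hn
    linarith [h n]
  have hbdd : BddBelow {a : ℝ | ∀ᶠ n in Filter.atTop, u n ≤ a} := by
    refine ⟨0, fun x hx => ?_⟩
    simp only [Set.mem_setOf_eq] at hx
    obtain ⟨n, hn⟩ := hx.exists
    exact (hu0 n).trans hn
  exact csInf_le hbdd hmem

end AuxArith
namespace TimedGame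

lemma step_one (T : TimedGame) (χ : T.MaxPre) (hχ : T.MaxTP χ) (μ : T.MinPre)
    (hμ : T.MinClosed μ) (ε : ℝ) (hε : 0 ≤ ε) (χε : T.MaxPre)
    (hχε : T.EpsCloseMax χ χε ε) (q : T.Omega) (μ' : T.MinPre) (hμ' : T.MinTP μ')
    (hsame : ∀ n : ℕ, T.sameType (Arena.play T.preArena μ' χ q n)
      (Arena.play T.preArena μ χε q n)) (n : ℕ) :
    ∃ (t t' : ℝ) (X : Set T.C) (c : T.C),
      (Arena.play T.preArena μ' χ q (n+1)).time = (Arena.play T.preArena μ' χ q n).time + t ∧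
      (Arena.play T.preArena μ χε q (n+1)).time = (Arena.play T.preArena μ χε q n).time + t' ∧
      0 ≤ t ∧ 0 ≤ t' ∧
      (0 ≤ (Arena.FinRun.last (Arena.play T.preArena μ' χ q n)).1.2 c → t ≤ (T.k : ℝ)) ∧
      (0 ≤ (Arena.FinRun.last (Arena.play T.preArena μ χε q n)).1.2 c → t' ≤ (T.k : ℝ)) ∧
      t - t' ≤ max ((Arena.FinRun.last (Arena.play T.preArena μ χε q n)).1.2 c
          - (Arena.FinRun.last (Arena.play T.preArena μ' χ q n)).1.2 c) 0 + ε ∧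
      (∀ d, (Arena.FinRun.last (Arena.play T.preArena μ' χ q (n+1))).1.2 d
          = if d ∈ X then 0 else (Arena.FinRun.last (Arena.play T.preArena μ' χ q n)).1.2 d + t) ∧
      (∀ d, (Arena.FinRun.last (Arena.play T.preArena μ χε q (n+1))).1.2 d
          = if d ∈ X then 0 else (Arena.FinRun.last (Arena.play T.preArena μ χε q n)).1.2 d + t') := by
  classical
  set p := Arena.play T.preArena μ' χ q n with hpdef
  set p' := Arena.play T.preArena μ χε q n with hp'def
  have hpn : p.n = n := Arena.play_n μ' χ q n
  have hp'n : p'.n = n := Arena.play_n μ χε q n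
  have hst : T.sameType p p' := hsame n
  have hlast2 : (Arena.FinRun.last p).2 = (Arena.FinRun.last p').2 := sameType_last hst
  have hminiff : (T.preArena).IsMin (Arena.FinRun.last p)
      ↔ (T.preArena).IsMin (Arena.FinRun.last p') := by
    show (Arena.FinRun.last p).2.1 ∈ T.LMin ↔ (Arena.FinRun.last p').2.1 ∈ T.LMin
    rw [hlast2]
  by_cases hmin : (T.preArena).IsMin (Arena.FinRun.last p)
  · -- Min moves
    have hmin' : (T.preArena).IsMin (Arena.FinRun.last p') := hminiff.mp hmin
    have e1 := Arena.play_succ_min μ' χ q n hmin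
    have e2 := Arena.play_succ_min μ χε q n hmin'
    set mv := μ'.1 p with hmvdef
    set mv' := μ.1 p' with hmv'def
    set q1 := Classical.choose (μ'.2 p hmin) with hq1def
    set q1' := Classical.choose (μ.2 p' hmin') with hq1'def
    have hTr : T.preTrans (Arena.FinRun.last p) mv q1 := Classical.choose_spec (μ'.2 p hmin)
    have hTr' : T.preTrans (Arena.FinRun.last p') mv' q1' :=
      Classical.choose_spec (μ.2 p' hmin')
    -- the moves have the same intermediate region and action
    have a1 : T.typeMoves (Arena.play T.preArena μ' χ q (n+1)) n = some mv.2 := by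
      rw [e1]
      have h := typeMoves_extend p mv q1 hTr
      rw [hpn] at h
      exact h
    have a2 : T.typeMoves (Arena.play T.preArena μ χε q (n+1)) n = some mv'.2 := by
      rw [e2]
      have h := typeMoves_extend p' mv' q1' hTr'
      rw [hp'n] at h
      exact h
    have hmvs : mv.2 = mv'.2 := by
      have h2 := congrFun (hsame (n+1)).2 n
      rw [a1, a2] at h2
      exact Option.some.inj h2
    have hl1 : Arena.FinRun.last (Arena.play T.preArena μ' χ q (n+1)) = q1 := by
      rw [e1]
      exact Arena.extend_last p mv q1 hTr
    have hl2 : Arena.FinRun.last (Arena.play T.preArena μ χε q (n+1)) = q1' := by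
      rw [e2]
      exact Arena.extend_last p' mv' q1' hTr'
    have htime1 : (Arena.play T.preArena μ' χ q (n+1)).time = p.time + mv.1 := by
      rw [e1]
      exact Arena.extend_time p mv q1 hTr
    have htime2 : (Arena.play T.preArena μ χε q (n+1)).time = p'.time + mv'.1 := by
      rw [e2]
      exact Arena.extend_time p' mv' q1' hTr'
    obtain ⟨hsnd, b, c, hbk, htp, htp'⟩ := hμ'.2 p p' hst
    rw [← hmvdef] at htp hsnd
    -- the boundary delay for p' is below the actual delay of μ at p'
    have hbd := hμ'.1 p'
    have hreg : (μ'.1 p').2.1 = mv'.2.1 := by rw [← hsnd, hmvs]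
    have hcl := hμ p'
    rw [← hmv'def] at hcl
    have hmem : mv'.1 ∈ {u : ℝ | 0 ≤ u ∧
        (fun c => (Arena.FinRun.last p').1.2 c + u) ∈ closure (μ'.1 p').2.1.2.1} := by
      refine ⟨hTr'.1, ?_⟩
      rw [hreg]
      exact hcl
    have hinf : (μ'.1 p').1 ≤ mv'.1 := by
      rw [hbd]
      exact csInf_le ⟨0, fun u hu => hu.1⟩ hmem
    have hsub := tOf_sub_le (T := T) (Arena.FinRun.last p).1 (Arena.FinRun.last p').1
      b c mv.2.2 (μ'.1 p').2.2
    rw [← htp, ← htp'] at hsub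
    -- t' ≤ k
    have ht'k : 0 ≤ (Arena.FinRun.last p').1.2 c → mv'.1 ≤ (T.k : ℝ) := by
      intro h0
      have hval := isVal_of_closure (T := T) mv'.2.1.2 _ hcl
      have := (hval c).2
      simp only at this
      linarith
    refine ⟨mv.1, mv'.1, T.ϱ mv.2.2, c, htime1, htime2, hTr.1, hTr'.1, ?_, ht'k, ?_, ?_, ?_⟩
    · intro h0
      rw [htp]
      exact tOf_le_k _ b c _ hbk h0
    · linarith
    · intro d
      rw [hl1, hTr.2.2.2]
      simp only [tsucc, resetv]
    · intro d
      rw [hl2, hTr'.2.2.2]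
      have hact : mv'.2.2 = mv.2.2 := by rw [hmvs]
      simp only [tsucc, resetv, hact]
  · -- Max moves
    have hmin' : ¬ (T.preArena).IsMin (Arena.FinRun.last p') := fun h => hmin (hminiff.mpr h)
    have e1 := Arena.play_succ_max μ' χ q n hmin
    have e2 := Arena.play_succ_max μ χε q n hmin'
    set mv := χ.1 p with hmvdef
    set mv' := χε.1 p' with hmv'def
    set q1 := Classical.choose (χ.2 p hmin) with hq1def
    set q1' := Classical.choose (χε.2 p' hmin') with hq1'def
    have hTr : T.preTrans (Arena.FinRun.last p) mv q1 := Classical.choose_spec (χ.2 p hmin)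
    have hTr' : T.preTrans (Arena.FinRun.last p') mv' q1' :=
      Classical.choose_spec (χε.2 p' hmin')
    have a1 : T.typeMoves (Arena.play T.preArena μ' χ q (n+1)) n = some mv.2 := by
      rw [e1]
      have h := typeMoves_extend p mv q1 hTr
      rw [hpn] at h
      exact h
    have a2 : T.typeMoves (Arena.play T.preArena μ χε q (n+1)) n = some mv'.2 := by
      rw [e2]
      have h := typeMoves_extend p' mv' q1' hTr'
      rw [hp'n] at h
      exact h
    have hmvs : mv.2 = mv'.2 := by
      have h2 := congrFun (hsame (n+1)).2 n
      rw [a1, a2] at h2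
      exact Option.some.inj h2
    have hl1 : Arena.FinRun.last (Arena.play T.preArena μ' χ q (n+1)) = q1 := by
      rw [e1]
      exact Arena.extend_last p mv q1 hTr
    have hl2 : Arena.FinRun.last (Arena.play T.preArena μ χε q (n+1)) = q1' := by
      rw [e2]
      exact Arena.extend_last p' mv' q1' hTr'
    have htime1 : (Arena.play T.preArena μ' χ q (n+1)).time = p.time + mv.1 := by
      rw [e1]
      exact Arena.extend_time p mv q1 hTr
    have htime2 : (Arena.play T.preArena μ χε q (n+1)).time = p'.time + mv'.1 := by
      rw [e2]
      exact Arena.extend_time p' mv' q1' hTr'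
    obtain ⟨hsnd, b, c, hbk, htp, htp'⟩ := hχ.2 p p' hst
    rw [← hmvdef] at htp hsnd
    obtain ⟨hsnd2, hmem, hge⟩ := hχε p'
    rw [← hmv'def] at hsnd2 hmem hge
    have hsub := tOf_sub_le (T := T) (Arena.FinRun.last p).1 (Arena.FinRun.last p').1
      b c mv.2.2 (χ.1 p').2.2
    rw [← htp, ← htp'] at hsub
    have ht'k : 0 ≤ (Arena.FinRun.last p').1.2 c → mv'.1 ≤ (T.k : ℝ) := by
      intro h0
      have hval := isVal_of_closure (T := T) (χ.1 p').2.1.2 _ (subset_closure hmem)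
      have := (hval c).2
      simp only at this
      linarith
    refine ⟨mv.1, mv'.1, T.ϱ mv.2.2, c, htime1, htime2, hTr.1, hTr'.1, ?_, ht'k, ?_, ?_, ?_⟩
    · intro h0
      rw [htp]
      exact tOf_le_k _ b c _ hbk h0
    · linarith
    · intro d
      rw [hl1, hTr.2.2.2]
      simp only [tsucc, resetv]
    · intro d
      rw [hl2, hTr'.2.2.2]
      have hact : mv'.2.2 = mv.2.2 := by rw [hmvs]
      simp only [tsucc, resetv, hact]

end TimedGame
namespace TimedGame

lemma step_two (T : TimedGame) (μ : T.MinPre) (hμ : T.MinTP μ) (χ : T.MaxPre)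
    (hχ : T.MaxClosed χ) (ε : ℝ) (hε : 0 ≤ ε) (με : T.MinPre)
    (hμε : T.EpsCloseMin μ με ε) (q : T.Omega) (χ' : T.MaxPre) (hχ' : T.MaxTP χ')
    (hsame : ∀ n : ℕ, T.sameType (Arena.play T.preArena μ χ' q n)
      (Arena.play T.preArena με χ q n)) (n : ℕ) :
    ∃ (t t' : ℝ) (X : Set T.C) (c : T.C),
      (Arena.play T.preArena με χ q (n+1)).time = (Arena.play T.preArena με χ q n).time + t ∧
      (Arena.play T.preArena μ χ' q (n+1)).time = (Arena.play T.preArena μ χ' q n).time + t' ∧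
      0 ≤ t ∧ 0 ≤ t' ∧
      (0 ≤ (Arena.FinRun.last (Arena.play T.preArena με χ q n)).1.2 c → t ≤ (T.k : ℝ)) ∧
      (0 ≤ (Arena.FinRun.last (Arena.play T.preArena μ χ' q n)).1.2 c → t' ≤ (T.k : ℝ)) ∧
      t - t' ≤ max ((Arena.FinRun.last (Arena.play T.preArena μ χ' q n)).1.2 c
          - (Arena.FinRun.last (Arena.play T.preArena με χ q n)).1.2 c) 0 + ε ∧
      (∀ d, (Arena.FinRun.last (Arena.play T.preArena με χ q (n+1))).1.2 d
          = if d ∈ X then 0 else (Arena.FinRun.last (Arena.play T.preArena με χ q n)).1.2 d + t) ∧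
      (∀ d, (Arena.FinRun.last (Arena.play T.preArena μ χ' q (n+1))).1.2 d
          = if d ∈ X then 0 else (Arena.FinRun.last (Arena.play T.preArena μ χ' q n)).1.2 d + t') := by
  classical
  set p := Arena.play T.preArena μ χ' q n with hpdef
  set p' := Arena.play T.preArena με χ q n with hp'def
  have hpn : p.n = n := Arena.play_n μ χ' q n
  have hp'n : p'.n = n := Arena.play_n με χ q n
  have hst : T.sameType p p' := hsame n
  have hlast2 : (Arena.FinRun.last p).2 = (Arena.FinRun.last p').2 := sameType_last hst
  have hminiff : (T.preArena).IsMin (Arena.FinRun.last p)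
      ↔ (T.preArena).IsMin (Arena.FinRun.last p') := by
    show (Arena.FinRun.last p).2.1 ∈ T.LMin ↔ (Arena.FinRun.last p').2.1 ∈ T.LMin
    rw [hlast2]
  by_cases hmin : (T.preArena).IsMin (Arena.FinRun.last p)
  · -- Min moves
    have hmin' : (T.preArena).IsMin (Arena.FinRun.last p') := hminiff.mp hmin
    have e1 := Arena.play_succ_min μ χ' q n hmin
    have e2 := Arena.play_succ_min με χ q n hmin'
    set mv := μ.1 p with hmvdef
    set mv' := με.1 p' with hmv'def
    set q1 := Classical.choose (μ.2 p hmin) with hq1def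
    set q1' := Classical.choose (με.2 p' hmin') with hq1'def
    have hTr : T.preTrans (Arena.FinRun.last p) mv q1 := Classical.choose_spec (μ.2 p hmin)
    have hTr' : T.preTrans (Arena.FinRun.last p') mv' q1' :=
      Classical.choose_spec (με.2 p' hmin')
    have a1 : T.typeMoves (Arena.play T.preArena μ χ' q (n+1)) n = some mv.2 := by
      rw [e1]
      have h := typeMoves_extend p mv q1 hTr
      rw [hpn] at h
      exact h
    have a2 : T.typeMoves (Arena.play T.preArena με χ q (n+1)) n = some mv'.2 := by
      rw [e2]
      have h := typeMoves_extend p' mv' q1' hTr'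
      rw [hp'n] at h
      exact h
    have hmvs : mv.2 = mv'.2 := by
      have h2 := congrFun (hsame (n+1)).2 n
      rw [a1, a2] at h2
      exact Option.some.inj h2
    have hl1 : Arena.FinRun.last (Arena.play T.preArena μ χ' q (n+1)) = q1 := by
      rw [e1]
      exact Arena.extend_last p mv q1 hTr
    have hl2 : Arena.FinRun.last (Arena.play T.preArena με χ q (n+1)) = q1' := by
      rw [e2]
      exact Arena.extend_last p' mv' q1' hTr'
    have htime1 : (Arena.play T.preArena μ χ' q (n+1)).time = p.time + mv.1 := by
      rw [e1]
      exact Arena.extend_time p mv q1 hTr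
    have htime2 : (Arena.play T.preArena με χ q (n+1)).time = p'.time + mv'.1 := by
      rw [e2]
      exact Arena.extend_time p' mv' q1' hTr'
    obtain ⟨hsnd, b, c, hbk, htp, htp'⟩ := hμ.2 p p' hst
    rw [← hmvdef] at htp hsnd
    obtain ⟨hsnd2, hmem, hle⟩ := hμε p'
    rw [← hmv'def] at hsnd2 hmem hle
    have hsub := tOf_sub_le (T := T) (Arena.FinRun.last p').1 (Arena.FinRun.last p).1
      b c (μ.1 p').2.2 mv.2.2
    rw [← htp, ← htp'] at hsub
    have htk : 0 ≤ (Arena.FinRun.last p').1.2 c → mv'.1 ≤ (T.k : ℝ) := by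
      intro h0
      have hval := isVal_of_closure (T := T) (μ.1 p').2.1.2 _ (subset_closure hmem)
      have := (hval c).2
      simp only at this
      linarith
    refine ⟨mv'.1, mv.1, T.ϱ mv.2.2, c, htime2, htime1, hTr'.1, hTr.1, htk, ?_, ?_, ?_, ?_⟩
    · intro h0
      rw [htp]
      exact tOf_le_k _ b c _ hbk h0
    · linarith
    · intro d
      rw [hl2, hTr'.2.2.2]
      have hact : mv'.2.2 = mv.2.2 := by rw [hmvs]
      simp only [tsucc, resetv, hact]
    · intro d
      rw [hl1, hTr.2.2.2]
      simp only [tsucc, resetv]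
  · -- Max moves
    have hmin' : ¬ (T.preArena).IsMin (Arena.FinRun.last p') := fun h => hmin (hminiff.mpr h)
    have e1 := Arena.play_succ_max μ χ' q n hmin
    have e2 := Arena.play_succ_max με χ q n hmin'
    set mv := χ'.1 p with hmvdef
    set mv' := χ.1 p' with hmv'def
    set q1 := Classical.choose (χ'.2 p hmin) with hq1def
    set q1' := Classical.choose (χ.2 p' hmin') with hq1'def
    have hTr : T.preTrans (Arena.FinRun.last p) mv q1 := Classical.choose_spec (χ'.2 p hmin)
    have hTr' : T.preTrans (Arena.FinRun.last p') mv' q1' :=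
      Classical.choose_spec (χ.2 p' hmin')
    have a1 : T.typeMoves (Arena.play T.preArena μ χ' q (n+1)) n = some mv.2 := by
      rw [e1]
      have h := typeMoves_extend p mv q1 hTr
      rw [hpn] at h
      exact h
    have a2 : T.typeMoves (Arena.play T.preArena με χ q (n+1)) n = some mv'.2 := by
      rw [e2]
      have h := typeMoves_extend p' mv' q1' hTr'
      rw [hp'n] at h
      exact h
    have hmvs : mv.2 = mv'.2 := by
      have h2 := congrFun (hsame (n+1)).2 n
      rw [a1, a2] at h2
      exact Option.some.inj h2
    have hl1 : Arena.FinRun.last (Arena.play T.preArena μ χ' q (n+1)) = q1 := by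
      rw [e1]
      exact Arena.extend_last p mv q1 hTr
    have hl2 : Arena.FinRun.last (Arena.play T.preArena με χ q (n+1)) = q1' := by
      rw [e2]
      exact Arena.extend_last p' mv' q1' hTr'
    have htime1 : (Arena.play T.preArena μ χ' q (n+1)).time = p.time + mv.1 := by
      rw [e1]
      exact Arena.extend_time p mv q1 hTr
    have htime2 : (Arena.play T.preArena με χ q (n+1)).time = p'.time + mv'.1 := by
      rw [e2]
      exact Arena.extend_time p' mv' q1' hTr'
    obtain ⟨hsnd, b, c, hbk, htp, htp'⟩ := hχ'.2 p p' hst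
    rw [← hmvdef] at htp hsnd
    -- the boundary delay of χ' at p' is above the actual delay of χ at p'
    have hbd := hχ'.1 p'
    have hreg : (χ'.1 p').2.1 = mv'.2.1 := by rw [← hsnd, hmvs]
    have hcl := hχ p'
    rw [← hmv'def] at hcl
    have hmemS : mv'.1 ∈ {u : ℝ | 0 ≤ u ∧
        (fun c => (Arena.FinRun.last p').1.2 c + u) ∈ closure (χ'.1 p').2.1.2.1} := by
      refine ⟨hTr'.1, ?_⟩
      rw [hreg]
      exact hcl
    have hbdd : BddAbove {u : ℝ | 0 ≤ u ∧
        (fun c => (Arena.FinRun.last p').1.2 c + u) ∈ closure (χ'.1 p').2.1.2.1} := by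
      refine ⟨(T.k : ℝ) - (Arena.FinRun.last p').1.2 c, fun u hu => ?_⟩
      have hval := isVal_of_closure (T := T) (χ'.1 p').2.1.2 _ hu.2
      have := (hval c).2
      simp only at this
      linarith
    have hsup : mv'.1 ≤ (χ'.1 p').1 := by
      rw [hbd]
      exact le_csSup hbdd hmemS
    have hsub := tOf_sub_le (T := T) (Arena.FinRun.last p').1 (Arena.FinRun.last p).1
      b c (χ'.1 p').2.2 mv.2.2
    rw [← htp, ← htp'] at hsub
    have htk : 0 ≤ (Arena.FinRun.last p').1.2 c → mv'.1 ≤ (T.k : ℝ) := by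
      intro h0
      have hval := isVal_of_closure (T := T) mv'.2.1.2 _ hcl
      have := (hval c).2
      simp only at this
      linarith
    refine ⟨mv'.1, mv.1, T.ϱ mv.2.2, c, htime2, htime1, hTr'.1, hTr.1, htk, ?_, ?_, ?_, ?_⟩
    · intro h0
      rw [htp]
      exact tOf_le_k _ b c _ hbk h0
    · linarith
    · intro d
      rw [hl2, hTr'.2.2.2]
      have hact : mv'.2.2 = mv.2.2 := by rw [hmvs]
      simp only [tsucc, resetv, hact]
    · intro d
      rw [hl1, hTr.2.2.2]
      simp only [tsucc, resetv]

end TimedGame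
/-- Playing a type-matching type-preserving boundary strategy against the
unperturbed opponent loses at most `ε` compared to playing against an
`ε`-close perturbation. -/
theorem boundary_better_against_epsilon (T : TimedGame) :
    (∀ χ : T.MaxPre, T.MaxTP χ → ∀ μ : T.MinPre, T.MinClosed μ →
      ∀ ε : ℝ, 0 < ε → ∀ χε : T.MaxPre, T.EpsCloseMax χ χε ε →
      ∀ q : T.Omega, T.barS q → ∀ μ' : T.MinPre, T.MinTP μ' →
      (∀ n : ℕ, T.sameType (Arena.play T.preArena μ' χ q n)
        (Arena.play T.preArena μ χε q n)) →
      Arena.AMax T.preArena q μ' χ - ε ≤ Arena.AMax T.preArena q μ χε) ∧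
    (∀ μ : T.MinPre, T.MinTP μ → ∀ χ : T.MaxPre, T.MaxClosed χ →
      ∀ ε : ℝ, 0 < ε → ∀ με : T.MinPre, T.EpsCloseMin μ με ε →
      ∀ q : T.Omega, T.barS q → ∀ χ' : T.MaxPre, T.MaxTP χ' →
      (∀ n : ℕ, T.sameType (Arena.play T.preArena μ χ' q n)
        (Arena.play T.preArena με χ q n)) →
      Arena.AMin T.preArena q με χ ≤ Arena.AMin T.preArena q μ χ' + ε) := by
  constructor
  · intro χ hχ μ hμ ε hε χε hχε q hq μ' hμ' hsame
    have hε' : 0 ≤ ε := le_of_lt hε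
    have hT0 : (Arena.play T.preArena μ' χ q 0).time = 0 := Arena.play_zero_time μ' χ q
    have hT'0 : (Arena.play T.preArena μ χε q 0).time = 0 := Arena.play_zero_time μ χε q
    have hν0pos : ∀ d, 0 ≤ (Arena.FinRun.last (Arena.play T.preArena μ' χ q 0)).1.2 d := by
      intro d
      have hval := TimedGame.isVal_of_closure (T := T) q.2.2 q.1.2 hq.2
      exact (hval d).1
    have hinv := aux_invariants
      (fun n => (Arena.play T.preArena μ' χ q n).time)
      (fun n => (Arena.play T.preArena μ χε q n).time)
      (fun n => (Arena.FinRun.last (Arena.play T.preArena μ' χ q n)).1.2)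
      (fun n => (Arena.FinRun.last (Arena.play T.preArena μ χε q n)).1.2)
      ε (T.k : ℝ) hε' (Nat.cast_nonneg _) hT0 hT'0 rfl hν0pos
      (TimedGame.step_one T χ hχ μ hμ ε hε' χε hχε q μ' hμ' hsame)
    rw [sub_le_iff_le_add]
    show Filter.liminf (fun n : ℕ => (Arena.play T.preArena μ' χ q n).time / n) Filter.atTop
        ≤ Filter.liminf (fun n : ℕ => (Arena.play T.preArena μ χε q n).time / n) Filter.atTop + ε
    apply aux_liminf_le _ _ ε (T.k : ℝ)
    · intro n
      match n with
      | 0 =>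
        rw [hT0, hT'0]
        simp only [Nat.cast_zero, div_zero, zero_div, zero_add]
        linarith
      | (m+1) =>
        have h1 := (hinv (m+1)).1
        have hn : (0:ℝ) < ((m+1 : ℕ) : ℝ) := by positivity
        rw [div_le_iff₀ hn, add_mul, div_mul_cancel₀ _ (ne_of_gt hn)]
        have hc := mul_comm (((m+1 : ℕ) : ℝ)) ε
        linarith
    · intro n
      exact div_nonneg (hinv n).2.1 (Nat.cast_nonneg n)
    · intro n
      match n with
      | 0 =>
        rw [hT'0]
        simp only [Nat.cast_zero, div_zero, zero_div]
        positivity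
      | (m+1) =>
        have h1 := (hinv (m+1)).2.2.2.2
        have hn : (0:ℝ) < ((m+1 : ℕ) : ℝ) := by positivity
        rw [div_le_iff₀ hn]
        have hc := mul_comm (((m+1 : ℕ) : ℝ)) ((T.k : ℝ))
        linarith
  · intro μ hμ χ hχ ε hε με hμε q hq χ' hχ' hsame
    have hε' : 0 ≤ ε := le_of_lt hε
    have hT0 : (Arena.play T.preArena με χ q 0).time = 0 := Arena.play_zero_time με χ q
    have hT'0 : (Arena.play T.preArena μ χ' q 0).time = 0 := Arena.play_zero_time μ χ' q
    have hν0pos : ∀ d, 0 ≤ (Arena.FinRun.last (Arena.play T.preArena με χ q 0)).1.2 d := by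
      intro d
      have hval := TimedGame.isVal_of_closure (T := T) q.2.2 q.1.2 hq.2
      exact (hval d).1
    have hinv := aux_invariants
      (fun n => (Arena.play T.preArena με χ q n).time)
      (fun n => (Arena.play T.preArena μ χ' q n).time)
      (fun n => (Arena.FinRun.last (Arena.play T.preArena με χ q n)).1.2)
      (fun n => (Arena.FinRun.last (Arena.play T.preArena μ χ' q n)).1.2)
      ε (T.k : ℝ) hε' (Nat.cast_nonneg _) hT0 hT'0 rfl hν0pos
      (TimedGame.step_two T μ hμ χ hχ ε hε' με hμε q χ' hχ' hsame)
    show Filter.limsup (fun n : ℕ => (Arena.play T.preArena με χ q n).time / n) Filter.atTop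
        ≤ Filter.limsup (fun n : ℕ => (Arena.play T.preArena μ χ' q n).time / n) Filter.atTop + ε
    apply aux_limsup_le _ _ ε (T.k : ℝ)
    · intro n
      match n with
      | 0 =>
        rw [hT0, hT'0]
        simp only [Nat.cast_zero, div_zero, zero_div, zero_add]
        linarith
      | (m+1) =>
        have h1 := (hinv (m+1)).1
        have hn : (0:ℝ) < ((m+1 : ℕ) : ℝ) := by positivity
        rw [div_le_iff₀ hn, add_mul, div_mul_cancel₀ _ (ne_of_gt hn)]
        have hc := mul_comm (((m+1 : ℕ) : ℝ)) ε
        linarith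
    · intro n
      exact div_nonneg (hinv n).2.1 (Nat.cast_nonneg n)
    · intro n
      match n with
      | 0 =>
        rw [hT'0]
        simp only [Nat.cast_zero, div_zero, zero_div]
        positivity
      | (m+1) =>
        have h1 := (hinv (m+1)).2.2.2.2
        have hn : (0:ℝ) < ((m+1 : ℕ) : ℝ) := by positivity
        rw [div_le_iff₀ hn]
        have hc := mul_comm (((m+1 : ℕ) : ℝ)) ((T.k : ℝ))
        linarith
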